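/- The triple u(x,y,t) = U₀/t, s(x,y,t) = x²/(4t) + b₃x/(a₃√t) + y²/(4σt) + c₃y/(2σU₀√t) + c₄, φ(x,y,t) = −(x²+σy²)/(8δt²) + (c₂−U₀)/t solves the dispersionless Davey–Stewartson system u_t + (u s_x)_x + σ(u s_y)_y = 0, s_t + (1/2)(s_x² + σ s_y²) − δφ = 0, σφ_yy − φ_xx + u_xx + σu_yy = 0 on t > 0, provided U₀ is a root of 4δU³ + (2b₃²/a₃² − 4c₂δ)U² + (1/2)σc₃² = 0. -/

import Mathlib

noncomputable section

/-- Partial derivative in the first (x) argument. -/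
def px (f : ℝ → ℝ → ℝ → ℝ) : ℝ → ℝ → ℝ → ℝ :=
  fun x y t => deriv (fun x' => f x' y t) x

/-- Partial derivative in the second (y) argument. -/
def py (f : ℝ → ℝ → ℝ → ℝ) : ℝ → ℝ → ℝ → ℝ :=
  fun x y t => deriv (fun y' => f x y' t) y

/-- Partial derivative in the third (t) argument. -/
def pt (f : ℝ → ℝ → ℝ → ℝ) : ℝ → ℝ → ℝ → ℝ :=
  fun x y t => deriv (fun t' => f x y t') t

/-- The dispersionless Davey–Stewartson system at a point (x,y,t):
u_t + (u s_x)_x + σ(u s_y)_y = 0,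
s_t + (1/2)(s_x² + σ s_y²) − δφ = 0,
σφ_yy − φ_xx + u_xx + σu_yy = 0. -/
def dDSeq (σ δ : ℝ) (u s φ : ℝ → ℝ → ℝ → ℝ) (x y t : ℝ) : Prop :=
  pt u x y t + px (fun x y t => u x y t * px s x y t) x y t
      + σ * py (fun x y t => u x y t * py s x y t) x y t = 0 ∧
  pt s x y t + (1/2) * ((px s x y t) ^ 2 + σ * (py s x y t) ^ 2) - δ * φ x y t = 0 ∧
  σ * py (py φ) x y t - px (px φ) x y t + px (px u) x y t + σ * py (py u) x y t = 0

lemma hd_lin (a b x : ℝ) : HasDerivAt (fun x : ℝ => a * x + b) a x := by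
  simpa using ((hasDerivAt_id x).const_mul a).add_const b

lemma hd_quad (A B C x : ℝ) :
    HasDerivAt (fun x : ℝ => A * x ^ 2 + B * x + C) (2 * A * x + B) x := by
  have h1 : HasDerivAt (fun x : ℝ => A * x ^ 2) (A * (2 * x)) x := by
    simpa using (hasDerivAt_pow 2 x).const_mul A
  have h2 : HasDerivAt (fun x : ℝ => B * x + C) B x := by
    simpa using ((hasDerivAt_id x).const_mul B).add_const C
  have h := h1.add h2
  have he : (fun x : ℝ => A * x ^ 2 + (B * x + C)) = fun x : ℝ => A * x ^ 2 + B * x + C := by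
    funext z; ring
  replace h : HasDerivAt (fun x : ℝ => A * x ^ 2 + (B * x + C)) (A * (2 * x) + B) x := h
  rw [he] at h
  convert h using 1
  ring

/-- The invariant solution u = U₀/t, s = x²/(4t) + b₃x/(a₃√t) + y²/(4σt) + c₃y/(2σU₀√t) + c₄,
φ = −(x²+σy²)/(8δt²) + (c₂−U₀)/t solves the dDS system on t > 0, provided U₀ is a root
of 4δU³ + (2b₃²/a₃² − 4c₂δ)U² + (1/2)σc₃² = 0. -/
theorem stmt_9 (σ δ a₃ b₃ c₂ c₃ c₄ U₀ : ℝ)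
    (hσ : σ = 1 ∨ σ = -1) (hδ : δ ≠ 0) (ha₃ : a₃ ≠ 0) (hU₀ : U₀ ≠ 0)
    (hroot : 4 * δ * U₀ ^ 3 + (2 * b₃ ^ 2 / a₃ ^ 2 - 4 * c₂ * δ) * U₀ ^ 2
      + (1/2) * σ * c₃ ^ 2 = 0)
    (u s φ : ℝ → ℝ → ℝ → ℝ)
    (hu : ∀ x y t, 0 < t → u x y t = U₀ / t)
    (hs : ∀ x y t, 0 < t → s x y t
      = x ^ 2 / (4 * t) + b₃ * x / (a₃ * Real.sqrt t)
        + y ^ 2 / (4 * σ * t) + c₃ * y / (2 * σ * U₀ * Real.sqrt t) + c₄)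
    (hφ : ∀ x y t, 0 < t → φ x y t
      = -(x ^ 2 + σ * y ^ 2) / (8 * δ * t ^ 2) + (c₂ - U₀) / t) :
    ∀ x y t : ℝ, 0 < t → dDSeq σ δ u s φ x y t := by
  have hσ0 : σ ≠ 0 := by rcases hσ with rfl | rfl <;> norm_num
  have hroot' : 4 * δ * U₀ ^ 3 * a₃ ^ 2 + (2 * b₃ ^ 2 - 4 * c₂ * δ * a₃ ^ 2) * U₀ ^ 2
      + (1/2) * σ * c₃ ^ 2 * a₃ ^ 2 = 0 := by
    have h2 : a₃ ^ 2 ≠ 0 := pow_ne_zero 2 ha₃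
    field_simp at hroot
    linear_combination hroot / 2
  have hσ2 : σ ^ 2 = 1 := by rcases hσ with rfl | rfl <;> norm_num
  intro x y t ht
  have ht' : t ≠ 0 := ht.ne'
  have hr0 : 0 < Real.sqrt t := Real.sqrt_pos.mpr ht
  set r := Real.sqrt t with hrdef
  have hr' : r ≠ 0 := hr0.ne'
  have hst2 : r ^ 2 = t := Real.sq_sqrt ht.le
  -- derivatives of u
  have hpxu : ∀ x', px u x' y t = 0 := by
    intro x'
    show deriv (fun x'' => u x'' y t) x' = 0
    have he : (fun x'' => u x'' y t) = fun _ => U₀ / t := funext fun x'' => hu x'' y t ht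
    rw [he, deriv_const]
  have hpyu : ∀ y', py u x y' t = 0 := by
    intro y'
    show deriv (fun y'' => u x y'' t) y' = 0
    have he : (fun y'' => u x y'' t) = fun _ => U₀ / t := funext fun y'' => hu x y'' t ht
    rw [he, deriv_const]
  have hpxpxu : px (px u) x y t = 0 := by
    show deriv (fun x' => px u x' y t) x = 0
    have he : (fun x' => px u x' y t) = fun _ => (0 : ℝ) := funext fun x' => hpxu x'
    rw [he, deriv_const]
  have hpypyu : py (py u) x y t = 0 := by
    show deriv (fun y' => py u x y' t) y = 0
    have he : (fun y' => py u x y' t) = fun _ => (0 : ℝ) := funext fun y' => hpyu y'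
    rw [he, deriv_const]
  have hptu : pt u x y t = U₀ * -(t ^ 2)⁻¹ := by
    show deriv (fun t' => u x y t') t = _
    have hev : (fun t' => u x y t') =ᶠ[nhds t] fun t' => U₀ * t'⁻¹ := by
      filter_upwards [Ioi_mem_nhds ht] with t' ht'
      rw [hu x y t' ht']; ring
    rw [hev.deriv_eq]
    exact ((hasDerivAt_inv ht').const_mul U₀).deriv
  -- x and y derivatives of s
  have hpxs : ∀ x', px s x' y t = 2 * (4 * t)⁻¹ * x' + b₃ / (a₃ * r) := by
    intro x'
    show deriv (fun x'' => s x'' y t) x' = _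
    have he : (fun x'' => s x'' y t)
        = fun x'' => (4 * t)⁻¹ * x'' ^ 2 + (b₃ / (a₃ * r)) * x''
          + (y ^ 2 / (4 * σ * t) + c₃ * y / (2 * σ * U₀ * r) + c₄) := by
      funext x''; rw [hs x'' y t ht]; ring
    rw [he, (hd_quad _ _ _ x').deriv]
  have hpys : ∀ y', py s x y' t = 2 * (4 * σ * t)⁻¹ * y' + c₃ / (2 * σ * U₀ * r) := by
    intro y'
    show deriv (fun y'' => s x y'' t) y' = _
    have he : (fun y'' => s x y'' t)
        = fun y'' => (4 * σ * t)⁻¹ * y'' ^ 2 + (c₃ / (2 * σ * U₀ * r)) * y''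
          + (x ^ 2 / (4 * t) + b₃ * x / (a₃ * r) + c₄) := by
      funext y''; rw [hs x y'' t ht]; ring
    rw [he, (hd_quad _ _ _ y').deriv]
  -- t derivative of s
  have hpts : pt s x y t = (x ^ 2 / 4 + y ^ 2 / (4 * σ)) * -(t ^ 2)⁻¹
      + (b₃ * x / a₃ + c₃ * y / (2 * σ * U₀)) * (-(1 / (2 * r)) / r ^ 2) := by
    show deriv (fun t' => s x y t') t = _
    have hev : (fun t' => s x y t') =ᶠ[nhds t]
        fun t' => (x ^ 2 / 4 + y ^ 2 / (4 * σ)) * t'⁻¹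
          + (b₃ * x / a₃ + c₃ * y / (2 * σ * U₀)) * (Real.sqrt t')⁻¹ + c₄ := by
      filter_upwards [Ioi_mem_nhds ht] with t' ht'
      rw [hs x y t' ht']; ring
    rw [hev.deriv_eq]
    have h1 := (hasDerivAt_inv ht').const_mul (x ^ 2 / 4 + y ^ 2 / (4 * σ))
    have h2 := ((Real.hasDerivAt_sqrt ht').inv hr').const_mul
      (b₃ * x / a₃ + c₃ * y / (2 * σ * U₀))
    exact ((h1.add h2).add_const c₄).deriv
  -- derivatives of φ
  have hpxφ : ∀ x', px φ x' y t = 2 * (-(8 * δ * t ^ 2)⁻¹) * x' := by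
    intro x'
    show deriv (fun x'' => φ x'' y t) x' = _
    have he : (fun x'' => φ x'' y t)
        = fun x'' => (-(8 * δ * t ^ 2)⁻¹) * x'' ^ 2 + 0 * x''
          + (-(σ * y ^ 2) / (8 * δ * t ^ 2) + (c₂ - U₀) / t) := by
      funext x''; rw [hφ x'' y t ht]; ring
    rw [he, (hd_quad _ _ _ x').deriv]; ring
  have hpyφ : ∀ y', py φ x y' t = 2 * (-(σ / (8 * δ * t ^ 2))) * y' := by
    intro y'
    show deriv (fun y'' => φ x y'' t) y' = _
    have he : (fun y'' => φ x y'' t)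
        = fun y'' => (-(σ / (8 * δ * t ^ 2))) * y'' ^ 2 + 0 * y''
          + (-(x ^ 2) / (8 * δ * t ^ 2) + (c₂ - U₀) / t) := by
      funext y''; rw [hφ x y'' t ht]; ring
    rw [he, (hd_quad _ _ _ y').deriv]; ring
  have hpxpxφ : px (px φ) x y t = 2 * (-(8 * δ * t ^ 2)⁻¹) := by
    show deriv (fun x' => px φ x' y t) x = _
    have he : (fun x' => px φ x' y t) = fun x' => (2 * (-(8 * δ * t ^ 2)⁻¹)) * x' + 0 := by
      funext x'; rw [hpxφ x']; ring
    rw [he, (hd_lin _ _ x).deriv]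
  have hpypyφ : py (py φ) x y t = 2 * (-(σ / (8 * δ * t ^ 2))) := by
    show deriv (fun y' => py φ x y' t) y = _
    have he : (fun y' => py φ x y' t) = fun y' => (2 * (-(σ / (8 * δ * t ^ 2)))) * y' + 0 := by
      funext y'; rw [hpyφ y']; ring
    rw [he, (hd_lin _ _ y).deriv]
  -- equation 1 middle terms
  have hA : px (fun x y t => u x y t * px s x y t) x y t = U₀ / t * (2 * (4 * t)⁻¹) := by
    show deriv (fun x' => u x' y t * px s x' y t) x = _
    have he : (fun x' => u x' y t * px s x' y t)
        = fun x' => (U₀ / t * (2 * (4 * t)⁻¹)) * x' + (U₀ / t) * (b₃ / (a₃ * r)) := by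
      funext x'; rw [hu x' y t ht, hpxs x']; ring
    rw [he, (hd_lin _ _ x).deriv]
  have hB : py (fun x y t => u x y t * py s x y t) x y t = U₀ / t * (2 * (4 * σ * t)⁻¹) := by
    show deriv (fun y' => u x y' t * py s x y' t) y = _
    have he : (fun y' => u x y' t * py s x y' t)
        = fun y' => (U₀ / t * (2 * (4 * σ * t)⁻¹)) * y' + (U₀ / t) * (c₃ / (2 * σ * U₀ * r)) := by
      funext y'; rw [hu x y' t ht, hpys y']; ring
    rw [he, (hd_lin _ _ y).deriv]
  refine ⟨?_, ?_, ?_⟩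
  · rw [hptu, hA, hB]
    field_simp
    ring
  · rw [hpts, hpxs x, hpys y, hφ x y t ht]
    rw [← hst2]
    field_simp
    linear_combination (256 * σ * r ^ 2) * hroot' + (128 * a₃ ^ 2 * U₀ ^ 2 * y ^ 2 - 128 * a₃ ^ 2 * r ^ 2 * c₃ ^ 2) * hσ2
  · rw [hpypyφ, hpxpxφ, hpxpxu, hpypyu]
    field_simp
    linear_combination (-2) * hσ2
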